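/- If X is a reflexive Banach space and T: X → Y a bounded operator, then SCS(T) = SS(T*) and SS(T) = SCS(T*). -/

import Mathlib

open NormedSpace Metric Set Filter
open scoped ENNReal

noncomputable section

/-- Hausdorff measure of noncompactness of a set. -/
def hchi {Y : Type*} [SeminormedAddCommGroup Y] (A : Set Y) : ℝ :=
  sInf { r : ℝ | ∃ F : Finset Y, ∀ a ∈ A, ∃ y ∈ F, dist a y ≤ r }

variable {X Y Z : Type*} [NormedAddCommGroup X] [NormedSpace ℝ X]
  [NormedAddCommGroup Y] [NormedSpace ℝ Y]

/-- χ(T) = Hausdorff measure of noncompactness of T(B_X). -/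
def chiOp (T : X →L[ℝ] Y) : ℝ := hchi (T '' closedBall 0 1)

/-- SS(T): the quantity measuring strict singularity. -/
def SS (T : X →L[ℝ] Y) : ℝ :=
  sSup { c : ℝ | ∃ M : Submodule ℝ X, IsClosed (M : Set X) ∧ ¬ FiniteDimensional ℝ M ∧
      c = sInf { r : ℝ | ∃ x ∈ M, ‖x‖ = 1 ∧ r = ‖T x‖ } }

/-- SS_Z(T): the quantity measuring Z-strict singularity. -/
def SSZ (Z : Type*) [NormedAddCommGroup Z] [NormedSpace ℝ Z] (T : X →L[ℝ] Y) : ℝ :=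
  sSup { r : ℝ | ∃ R : Z →L[ℝ] X, ∃ c : ℝ, 0 < c ∧ (∀ z, c * ‖z‖ ≤ ‖T (R z)‖) ∧ r = c / ‖R‖ }

/-- The adjoint (dual) operator T* : Y* → X*. -/
def adjOp (T : X →L[ℝ] Y) : StrongDual ℝ Y →L[ℝ] StrongDual ℝ X :=
  (ContinuousLinearMap.compL ℝ X Y ℝ).flip T

/-- δ(S) for a (surjective) map S: the supremum of δ > 0 with δ·B ⊆ S(B). -/
def deltaQ {W : Type*} [SeminormedAddCommGroup W] (S : X → W) : ℝ :=
  sSup { d : ℝ | 0 < d ∧ ∀ w : W, ‖w‖ ≤ d → ∃ x : X, ‖x‖ ≤ 1 ∧ S x = w }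

/-- SCS(T): the quantity measuring strict cosingularity. -/
def SCS (T : X →L[ℝ] Y) : ℝ :=
  sSup { r : ℝ | ∃ N : Submodule ℝ Y, IsClosed (N : Set Y) ∧ ¬ FiniteDimensional ℝ (Y ⧸ N) ∧
      Function.Surjective (fun x : X => (Submodule.Quotient.mk (T x) : Y ⧸ N)) ∧
      r = deltaQ (fun x : X => (Submodule.Quotient.mk (T x) : Y ⧸ N)) }

/-- SCS_Z(T): the quantity measuring Z-strict cosingularity. -/
def SCSZ (Z : Type*) [NormedAddCommGroup Z] [NormedSpace ℝ Z] (T : X →L[ℝ] Y) : ℝ :=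
  sSup { r : ℝ | ∃ S : Y →L[ℝ] Z, Function.Surjective (fun x : X => S (T x)) ∧
      r = deltaQ (fun x : X => S (T x)) / ‖S‖ }

/-- The annihilator M^⊥ in the continuous dual. -/
def annih (M : Submodule ℝ X) : Submodule ℝ (StrongDual ℝ X) where
  carrier := { f | ∀ x ∈ M, f x = 0 }
  add_mem' := by intro f g hf hg x hx; simp [hf x hx, hg x hx]
  zero_mem' := by intro x _; simp
  smul_mem' := by intro c f hf x hx; simp [hf x hx]

/-- The quantity wk_Z(A) measuring weak non-compactness. -/
def wkk (Z : Type*) [NormedAddCommGroup Z] [NormedSpace ℝ Z] (A : Set Z) : ℝ :=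
  sSup { r : ℝ | ∃ φ : StrongDual ℝ (StrongDual ℝ Z),
      StrongDual.toWeakDual φ ∈ closure (StrongDual.toWeakDual '' (inclusionInDoubleDual ℝ Z '' A)) ∧
      r = Metric.infDist φ (Set.range (inclusionInDoubleDual ℝ Z)) }

/-- A Banach space is λ-subprojective. -/
def Subprojective (lam : ℝ) (Y : Type*) [NormedAddCommGroup Y] [NormedSpace ℝ Y] : Prop :=
  ∀ M : Submodule ℝ Y, IsClosed (M : Set Y) → ¬ FiniteDimensional ℝ M →
    ∃ N : Submodule ℝ Y, N ≤ M ∧ IsClosed (N : Set Y) ∧ ¬ FiniteDimensional ℝ N ∧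
      ∃ P : Y →L[ℝ] Y, ‖P‖ ≤ lam ∧ LinearMap.range (P : Y →ₗ[ℝ] Y) = N ∧ ∀ y, P (P y) = P y

/-- A Banach space is λ-superprojective. -/
def Superprojective (lam : ℝ) (Y : Type*) [NormedAddCommGroup Y] [NormedSpace ℝ Y] : Prop :=
  ∀ M : Submodule ℝ Y, IsClosed (M : Set Y) → ¬ FiniteDimensional ℝ (Y ⧸ M) →
    ∃ N : Submodule ℝ Y, M ≤ N ∧ IsClosed (N : Set Y) ∧ ¬ FiniteDimensional ℝ (Y ⧸ N) ∧
      ∃ P : Y →L[ℝ] Y, ‖P‖ ≤ lam ∧ LinearMap.range (P : Y →ₗ[ℝ] Y) = N ∧ ∀ y, P (P y) = P y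

end



noncomputable section stmt8aux

open NormedSpace

variable {X Y : Type*} [NormedAddCommGroup X] [NormedSpace ℝ X]
  [NormedAddCommGroup Y] [NormedSpace ℝ Y]

lemma adjOp_apply (T : X →L[ℝ] Y) (g : StrongDual ℝ Y) (x : X) : adjOp T g x = g (T x) := rfl

lemma deltaQ_nonneg' {W : Type*} [SeminormedAddCommGroup W] (S : X → W) : 0 ≤ deltaQ S :=
  Real.sSup_nonneg fun _ hd => hd.1.le

lemma SS_nonneg (T : X →L[ℝ] Y) : 0 ≤ SS T := by
  apply Real.sSup_nonneg
  rintro c ⟨M, -, -, rfl⟩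
  apply Real.sInf_nonneg
  rintro r ⟨x, -, -, rfl⟩
  positivity

lemma SCS_nonneg (T : X →L[ℝ] Y) : 0 ≤ SCS T := by
  apply Real.sSup_nonneg
  rintro r ⟨N, -, -, -, rfl⟩
  exact deltaQ_nonneg' _

lemma exists_mem_norm_one {M : Submodule ℝ X} (h : ¬ FiniteDimensional ℝ M) :
    ∃ x ∈ M, ‖x‖ = 1 := by
  have hne : M ≠ ⊥ := by rintro rfl; exact h inferInstance
  obtain ⟨x, hxM, hx0⟩ := Submodule.exists_mem_ne_zero_of_ne_bot hne
  exact ⟨(‖x‖⁻¹ : ℝ) • x, M.smul_mem _ hxM, norm_smul_inv_norm (𝕜 := ℝ) hx0⟩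

lemma SS_bddAbove (T : X →L[ℝ] Y) :
    BddAbove { c : ℝ | ∃ M : Submodule ℝ X, IsClosed (M : Set X) ∧ ¬ FiniteDimensional ℝ M ∧
      c = sInf { r : ℝ | ∃ x ∈ M, ‖x‖ = 1 ∧ r = ‖T x‖ } } := by
  refine ⟨‖T‖, ?_⟩
  rintro c ⟨M, -, hMi, rfl⟩
  obtain ⟨x, hxM, hx1⟩ := exists_mem_norm_one hMi
  have hbb : BddBelow { r : ℝ | ∃ x ∈ M, ‖x‖ = 1 ∧ r = ‖T x‖ } := by
    refine ⟨0, ?_⟩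
    rintro r ⟨z, -, -, rfl⟩
    positivity
  refine (csInf_le hbb ⟨x, hxM, hx1, rfl⟩).trans ?_
  calc ‖T x‖ ≤ ‖T‖ * ‖x‖ := T.le_opNorm x
    _ = ‖T‖ := by rw [hx1, mul_one]

lemma mem_annih {M : Submodule ℝ X} {f : StrongDual ℝ X} : f ∈ annih M ↔ ∀ x ∈ M, f x = 0 := Iff.rfl

lemma annih_isClosed (M : Submodule ℝ X) :
    IsClosed ((annih M : Submodule ℝ (StrongDual ℝ X)) : Set (StrongDual ℝ X)) := by
  have h : ((annih M : Submodule ℝ (StrongDual ℝ X)) : Set (StrongDual ℝ X)) =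
      ⋂ x ∈ (M : Set X), {f : StrongDual ℝ X | f x = 0} := by
    ext f
    simp only [Set.mem_iInter, Set.mem_setOf_eq, SetLike.mem_coe]
    exact mem_annih
  rw [h]
  refine isClosed_biInter fun x _ => isClosed_eq ?_ continuous_const
  exact (inclusionInDoubleDual ℝ X x).continuous

lemma exists_annih_apply_ne {N : Submodule ℝ Y} (hNc : IsClosed (N : Set Y)) {y : Y}
    (hy : y ∉ N) : ∃ f : StrongDual ℝ Y, f ∈ annih N ∧ f y ≠ 0 := by
  obtain ⟨f, u, hfN, hfy⟩ := geometric_hahn_banach_closed_point N.convex hNc hy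
  have hker : ∀ a ∈ N, f a = 0 := by
    intro a ha
    by_contra h0
    have h1 := hfN (((u + 1) / f a) • a) (N.smul_mem _ ha)
    rw [map_smul, smul_eq_mul, div_mul_cancel₀ _ h0] at h1
    linarith
  have h0 : (0 : ℝ) < u := by
    have := hfN 0 N.zero_mem
    rwa [map_zero] at this
  exact ⟨f, hker, by intro h; rw [h] at hfy; linarith⟩

lemma quotient_findim_of_annih_findim {N : Submodule ℝ Y} (hNc : IsClosed (N : Set Y))
    (h : FiniteDimensional ℝ (annih N)) : FiniteDimensional ℝ (Y ⧸ N) := by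
  classical
  have hfg : (annih N : Submodule ℝ (StrongDual ℝ Y)).FG :=
    (Submodule.fg_iff_finiteDimensional _).2 h
  obtain ⟨s, hs⟩ := hfg
  let Φ : Y →ₗ[ℝ] (s → ℝ) := LinearMap.pi fun g => ((g : StrongDual ℝ Y) : Y →ₗ[ℝ] ℝ)
  have hKN : LinearMap.ker Φ ≤ N := by
    intro y hy
    by_contra hyN
    obtain ⟨f, hfA, hfy⟩ := exists_annih_apply_ne hNc hyN
    have hfspan : f ∈ Submodule.span ℝ (s : Set (StrongDual ℝ Y)) := by rw [hs]; exact hfA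
    refine hfy ?_
    refine Submodule.span_induction ?_ rfl ?_ ?_ hfspan
    · intro g hg
      have : Φ y = 0 := hy
      exact congrFun this ⟨g, hg⟩
    · intro a b _ _ ha hb
      simp [ha, hb]
    · intro t a _ ha
      simp [ha]
  have h1 : FiniteDimensional ℝ (Y ⧸ LinearMap.ker Φ) :=
    LinearEquiv.finiteDimensional (Φ.quotKerEquivRange).symm
  have hcond : LinearMap.ker Φ ≤ N.comap (LinearMap.id : Y →ₗ[ℝ] Y) := hKN
  have hsurj : Function.Surjective (Submodule.mapQ (LinearMap.ker Φ) N LinearMap.id hcond) := by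
    intro u
    obtain ⟨y, rfl⟩ := Submodule.Quotient.mk_surjective N u
    exact ⟨Submodule.Quotient.mk y, rfl⟩
  exact Module.Finite.of_surjective _ hsurj

lemma annih_not_findim {N : Submodule ℝ Y} (hNc : IsClosed (N : Set Y))
    (hNi : ¬ FiniteDimensional ℝ (Y ⧸ N)) :
    ¬ FiniteDimensional ℝ (annih N : Submodule ℝ (StrongDual ℝ Y)) :=
  fun h => hNi (quotient_findim_of_annih_findim hNc h)

lemma findim_of_dual_findim {W : Type*} [NormedAddCommGroup W] [NormedSpace ℝ W]
    (h : FiniteDimensional ℝ (StrongDual ℝ W)) : FiniteDimensional ℝ W := by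
  have hinj : Function.Injective ((inclusionInDoubleDual ℝ W).toLinearMap) := by
    intro a b hab
    rw [eq_iff_forall_dual_eq ℝ]
    intro g
    exact DFunLike.congr_fun hab g
  haveI : FiniteDimensional ℝ (StrongDual ℝ (StrongDual ℝ W)) := inferInstance
  exact FiniteDimensional.of_injective _ hinj

lemma quot_annih_not_findim {M : Submodule ℝ X} (hMi : ¬ FiniteDimensional ℝ M) :
    ¬ FiniteDimensional ℝ (StrongDual ℝ X ⧸ (annih M : Submodule ℝ (StrongDual ℝ X))) := by
  intro hfin
  apply hMi
  apply findim_of_dual_findim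
  let res : StrongDual ℝ X →ₗ[ℝ] StrongDual ℝ M := (adjOp M.subtypeL).toLinearMap
  have hle : (annih M : Submodule ℝ (StrongDual ℝ X)) ≤ LinearMap.ker res := by
    intro f hf
    ext m
    exact hf m m.2
  have hq : Function.Surjective (Submodule.liftQ _ res hle) := by
    intro φ
    obtain ⟨g, hg, -⟩ := exists_extension_norm_eq M φ
    refine ⟨Submodule.Quotient.mk g, ?_⟩
    rw [Submodule.liftQ_apply]
    ext m
    exact hg m
  exact Module.Finite.of_surjective _ hq

lemma key_ext (T : X →L[ℝ] Y) (M : Submodule ℝ X) {c : ℝ} (hc : 0 < c)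
    (hlow : ∀ m ∈ M, c * ‖m‖ ≤ ‖T m‖) (h₀ : StrongDual ℝ X) {b : ℝ} (hb : 0 ≤ b)
    (hbd : ∀ m : M, ‖h₀ m‖ ≤ b * ‖m‖) :
    ∃ g : StrongDual ℝ Y, ‖g‖ ≤ b / c ∧ ∀ m ∈ M, g (T m) = h₀ m := by
  set j : M →L[ℝ] Y := T.comp M.subtypeL with hj
  have hjlow : ∀ m : M, c * ‖m‖ ≤ ‖j m‖ := fun m => hlow m m.2
  have hjinj : Function.Injective (j.toLinearMap) := by
    intro a b' hab
    have h1 : j (a - b') = 0 := by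
      rw [map_sub]
      rw [sub_eq_zero]
      exact hab
    have h2 := hjlow (a - b')
    rw [h1, norm_zero] at h2
    have h3 : ‖a - b'‖ ≤ 0 := by nlinarith
    have h4 : a - b' = 0 := by
      rw [← norm_le_zero_iff]
      exact h3
    rwa [sub_eq_zero] at h4
  let e := LinearEquiv.ofInjective j.toLinearMap hjinj
  let φ₀ : LinearMap.range j.toLinearMap →ₗ[ℝ] ℝ :=
    (h₀.toLinearMap.comp M.subtype).comp e.symm.toLinearMap
  have hsymm : ∀ w : LinearMap.range j.toLinearMap, (j (e.symm w) : Y) = (w : Y) := by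
    intro w
    have h1 := e.apply_symm_apply w
    have h2 : ((e (e.symm w)) : Y) = j (e.symm w) := LinearEquiv.ofInjective_apply _ _
    rw [← h2, h1]
  have hφbd : ∀ w, ‖φ₀ w‖ ≤ (b / c) * ‖w‖ := by
    intro w
    have h1 : ‖h₀ (e.symm w)‖ ≤ b * ‖(e.symm w : X)‖ := hbd _
    have h2 : c * ‖(e.symm w : X)‖ ≤ ‖(w : Y)‖ := by
      rw [← hsymm w]
      exact hjlow _
    have h3 : ‖(e.symm w : X)‖ ≤ ‖(w : Y)‖ / c := by
      rw [le_div_iff₀ hc]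
      linarith [h2]
    have h4 : ‖φ₀ w‖ = ‖h₀ (e.symm w)‖ := rfl
    rw [h4]
    calc ‖h₀ (e.symm w)‖ ≤ b * ‖(e.symm w : X)‖ := h1
      _ ≤ b * (‖(w : Y)‖ / c) := by
          exact mul_le_mul_of_nonneg_left h3 hb
      _ = (b / c) * ‖(w : Y)‖ := by ring
  let φ : LinearMap.range j.toLinearMap →L[ℝ] ℝ := LinearMap.mkContinuous φ₀ (b / c) hφbd
  obtain ⟨g, hg, hgn⟩ := exists_extension_norm_eq _ φ
  refine ⟨g, ?_, ?_⟩
  · rw [hgn]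
    exact LinearMap.mkContinuous_norm_le _ (by positivity) _
  · intro m hm
    have hmem : T m ∈ LinearMap.range j.toLinearMap := ⟨⟨m, hm⟩, rfl⟩
    have h1 := hg ⟨T m, hmem⟩
    have hsm : e.symm ⟨T m, hmem⟩ = ⟨m, hm⟩ := by
      apply hjinj
      exact (hsymm ⟨T m, hmem⟩).trans rfl
    calc g (T m) = φ ⟨T m, hmem⟩ := h1
      _ = h₀ ((e.symm ⟨T m, hmem⟩ : M) : X) := rfl
      _ = h₀ m := congrArg (fun z : M => h₀ (z : X)) hsm


lemma findim_of_subsingleton {W : Type*} [AddCommGroup W] [Module ℝ W] [Subsingleton W] :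
    FiniteDimensional ℝ W :=
  Module.Finite.of_surjective (0 : (Fin 1 → ℝ) →ₗ[ℝ] W) (fun w => ⟨0, Subsingleton.elim _ _⟩)

lemma quot_norm_pos {N : Submodule ℝ Y} (hNc : IsClosed (N : Set Y)) {v : Y ⧸ N}
    (hv : v ≠ 0) : 0 < ‖v‖ := by
  rcases (norm_nonneg v).lt_or_eq with h | h
  · exact h
  · exfalso
    obtain ⟨y, rfl⟩ := Submodule.Quotient.mk_surjective N v
    apply hv
    have hy0 : ‖QuotientAddGroup.mk' N.toAddSubgroup y‖ = 0 := h.symm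
    have hy : y ∈ closure (N.toAddSubgroup : Set Y) :=
      QuotientAddGroup.norm_mk_eq_zero_iff_mem_closure.1 hy0
    rw [Submodule.coe_toAddSubgroup] at hy
    rw [hNc.closure_eq] at hy
    exact (Submodule.Quotient.mk_eq_zero N).2 hy

lemma mem_deltaQ_set_le (T : X →L[ℝ] Y) (N : Submodule ℝ Y) (hNc : IsClosed (N : Set Y))
    (hNi : ¬ FiniteDimensional ℝ (Y ⧸ N)) {d : ℝ}
    (hd0 : 0 < d) (hd : ∀ w : Y ⧸ N, ‖w‖ ≤ d →
      ∃ x : X, ‖x‖ ≤ 1 ∧ (Submodule.Quotient.mk (T x) : Y ⧸ N) = w) : d ≤ ‖T‖ := by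
  have hnt : Nontrivial (Y ⧸ N) := by
    by_contra h
    rw [not_nontrivial_iff_subsingleton] at h
    exact hNi findim_of_subsingleton
  obtain ⟨v, hv⟩ := exists_ne (0 : Y ⧸ N)
  have hv0 : 0 < ‖v‖ := quot_norm_pos hNc hv
  set w : Y ⧸ N := (d / ‖v‖) • v with hw
  have hwn : ‖w‖ = d := by
    rw [hw, norm_smul, Real.norm_eq_abs, abs_div, abs_of_pos hd0, abs_of_pos hv0,
      div_mul_cancel₀ _ hv0.ne']
  obtain ⟨x, hx1, hx2⟩ := hd w hwn.le
  calc d = ‖w‖ := hwn.symm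
    _ = ‖(Submodule.Quotient.mk (T x) : Y ⧸ N)‖ := by rw [hx2]
    _ ≤ ‖T x‖ := Submodule.Quotient.norm_mk_le N (T x)
    _ ≤ ‖T‖ * ‖x‖ := T.le_opNorm x
    _ ≤ ‖T‖ * 1 := mul_le_mul_of_nonneg_left hx1 (norm_nonneg T)
    _ = ‖T‖ := mul_one _

lemma SCS_bddAbove (T : X →L[ℝ] Y) :
    BddAbove { r : ℝ | ∃ N : Submodule ℝ Y, IsClosed (N : Set Y) ∧
      ¬ FiniteDimensional ℝ (Y ⧸ N) ∧
      Function.Surjective (fun x : X => (Submodule.Quotient.mk (T x) : Y ⧸ N)) ∧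
      r = deltaQ (fun x : X => (Submodule.Quotient.mk (T x) : Y ⧸ N)) } := by
  refine ⟨‖T‖, ?_⟩
  rintro r ⟨N, hNc, hNi, -, rfl⟩
  apply Real.sSup_le _ (norm_nonneg T)
  rintro d ⟨hd0, hd⟩
  exact mem_deltaQ_set_le T N hNc hNi hd0 hd

lemma ineqA (T : X →L[ℝ] Y) : SCS T ≤ SS (adjOp T) := by
  apply Real.sSup_le _ (SS_nonneg _)
  rintro r ⟨N, hNc, hNi, -, rfl⟩
  apply Real.sSup_le _ (SS_nonneg _)
  rintro d ⟨hd0, hd⟩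
  have hanni : ¬ FiniteDimensional ℝ (annih N : Submodule ℝ (StrongDual ℝ Y)) :=
    annih_not_findim hNc hNi
  set c₀ := sInf { r : ℝ | ∃ f ∈ (annih N : Submodule ℝ (StrongDual ℝ Y)), ‖f‖ = 1 ∧
    r = ‖adjOp T f‖ } with hc₀
  have hmem : c₀ ∈ { c : ℝ | ∃ M : Submodule ℝ (StrongDual ℝ Y),
      IsClosed (M : Set (StrongDual ℝ Y)) ∧ ¬ FiniteDimensional ℝ M ∧
      c = sInf { r : ℝ | ∃ f ∈ M, ‖f‖ = 1 ∧ r = ‖adjOp T f‖ } } :=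
    ⟨annih N, annih_isClosed N, hanni, rfl⟩
  refine le_trans ?_ (le_csSup (SS_bddAbove (adjOp T)) hmem)
  obtain ⟨f₀, hf₀M, hf₀1⟩ := exists_mem_norm_one hanni
  refine le_csInf ⟨_, f₀, hf₀M, hf₀1, rfl⟩ ?_
  rintro r ⟨f, hfN, hf1, rfl⟩
  by_contra hlt
  push_neg at hlt
  have hdivlt : ‖adjOp T f‖ / d < ‖f‖ := by
    rw [hf1]
    exact (div_lt_one hd0).2 hlt
  obtain ⟨y, hy1, hy2⟩ := f.exists_lt_apply_of_lt_opNorm hdivlt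
  have hwle : ‖(Submodule.Quotient.mk (d • y) : Y ⧸ N)‖ ≤ d := by
    calc ‖(Submodule.Quotient.mk (d • y) : Y ⧸ N)‖ ≤ ‖d • y‖ :=
          Submodule.Quotient.norm_mk_le N _
      _ = |d| * ‖y‖ := by rw [norm_smul, Real.norm_eq_abs]
      _ ≤ d * 1 := by
          rw [abs_of_pos hd0]
          exact mul_le_mul_of_nonneg_left hy1.le hd0.le
      _ = d := mul_one d
  obtain ⟨x, hx1, hx2⟩ := hd _ hwle
  have hdiff : T x - d • y ∈ N := (Submodule.Quotient.eq N).1 hx2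
  have hfTx : f (T x) = d * f y := by
    have h0 := hfN _ hdiff
    rw [map_sub, map_smul, smul_eq_mul, sub_eq_zero] at h0
    exact h0
  have h1 : ‖f (T x)‖ ≤ ‖adjOp T f‖ := by
    calc ‖f (T x)‖ = ‖adjOp T f x‖ := rfl
      _ ≤ ‖adjOp T f‖ * ‖x‖ := (adjOp T f).le_opNorm x
      _ ≤ ‖adjOp T f‖ * 1 := mul_le_mul_of_nonneg_left hx1 (norm_nonneg _)
      _ = ‖adjOp T f‖ := mul_one _
  have h2 : ‖adjOp T f‖ < ‖f (T x)‖ := by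
    rw [hfTx, norm_mul, Real.norm_eq_abs d, abs_of_pos hd0]
    calc ‖adjOp T f‖ = d * (‖adjOp T f‖ / d) := by field_simp
      _ < d * ‖f y‖ := by
          exact (mul_lt_mul_iff_right₀ hd0).2 hy2
  linarith


lemma ineqC (T : X →L[ℝ] Y) : SS T ≤ SCS (adjOp T) := by
  apply Real.sSup_le _ (SCS_nonneg _)
  rintro c ⟨M, hMc, hMi, rfl⟩
  set cM := sInf { r : ℝ | ∃ x ∈ M, ‖x‖ = 1 ∧ r = ‖T x‖ } with hcM
  rcases le_or_gt cM 0 with hle | hpos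
  · exact hle.trans (SCS_nonneg _)
  have hbb : BddBelow { r : ℝ | ∃ x ∈ M, ‖x‖ = 1 ∧ r = ‖T x‖ } := by
    refine ⟨0, ?_⟩
    rintro r ⟨z, -, -, rfl⟩
    positivity
  have hlow : ∀ m ∈ M, cM * ‖m‖ ≤ ‖T m‖ := by
    intro m hm
    by_cases hm0 : m = 0
    · simp [hm0]
    · have hu : (‖m‖⁻¹ : ℝ) • m ∈ M := M.smul_mem _ hm
      have hu1 : ‖(‖m‖⁻¹ : ℝ) • m‖ = 1 := norm_smul_inv_norm (𝕜 := ℝ) hm0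
      have h1 : cM ≤ ‖T ((‖m‖⁻¹ : ℝ) • m)‖ := csInf_le hbb ⟨_, hu, hu1, rfl⟩
      rw [map_smul, norm_smul, Real.norm_eq_abs, abs_inv, abs_of_nonneg (norm_nonneg m)] at h1
      have hm0' : 0 < ‖m‖ := norm_pos_iff.2 hm0
      calc cM * ‖m‖ ≤ (‖m‖⁻¹ * ‖T m‖) * ‖m‖ := by nlinarith
        _ = ‖T m‖ := by field_simp
  have hNc := annih_isClosed M
  have hNi := quot_annih_not_findim hMi
  have hsurj : Function.Surjective (fun g : StrongDual ℝ Y =>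
      (Submodule.Quotient.mk (adjOp T g) : StrongDual ℝ X ⧸ (annih M : Submodule ℝ (StrongDual ℝ X)))) := by
    intro u
    obtain ⟨h₀, rfl⟩ := Submodule.Quotient.mk_surjective _ u
    obtain ⟨g, -, hg⟩ := key_ext T M hpos hlow h₀ (norm_nonneg h₀)
      (fun m => h₀.le_opNorm m)
    refine ⟨g, ?_⟩
    refine (Submodule.Quotient.eq _).2 ?_
    intro x hx
    rw [ContinuousLinearMap.sub_apply, adjOp_apply, hg x hx, sub_self]
  have hcd : cM ∈ { d : ℝ | 0 < d ∧
      ∀ w : StrongDual ℝ X ⧸ (annih M : Submodule ℝ (StrongDual ℝ X)), ‖w‖ ≤ d →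
      ∃ g : StrongDual ℝ Y, ‖g‖ ≤ 1 ∧
        (Submodule.Quotient.mk (adjOp T g) : StrongDual ℝ X ⧸ (annih M : Submodule ℝ (StrongDual ℝ X))) = w } := by
    refine ⟨hpos, ?_⟩
    intro w hw
    obtain ⟨h₀, rfl⟩ := Submodule.Quotient.mk_surjective _ w
    set hr : M →L[ℝ] ℝ := h₀.comp M.subtypeL with hhr
    have hrle : ‖hr‖ ≤ ‖(Submodule.Quotient.mk h₀ :
        StrongDual ℝ X ⧸ (annih M : Submodule ℝ (StrongDual ℝ X)))‖ := by
      refine le_of_forall_pos_le_add ?_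
      intro ε hε
      obtain ⟨h', hh', hnorm⟩ := Submodule.Quotient.norm_mk_lt
        (Submodule.Quotient.mk h₀ : StrongDual ℝ X ⧸ (annih M : Submodule ℝ (StrongDual ℝ X))) hε
      have hdm : h' - h₀ ∈ (annih M : Submodule ℝ (StrongDual ℝ X)) := (Submodule.Quotient.eq _).1 hh'
      have heq : h'.comp M.subtypeL = hr := by
        ext m
        have h2 := hdm m m.2
        rw [ContinuousLinearMap.sub_apply, sub_eq_zero] at h2
        exact h2
      have h3 : ‖hr‖ ≤ ‖h'‖ := by
        rw [← heq]
        refine ContinuousLinearMap.opNorm_le_bound _ (norm_nonneg h') ?_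
        intro m
        exact h'.le_opNorm m
      linarith
    have hrc : ‖hr‖ ≤ cM := hrle.trans hw
    obtain ⟨g, hgn, hg⟩ := key_ext T M hpos hlow h₀ (norm_nonneg hr)
      (fun m => hr.le_opNorm m)
    refine ⟨g, hgn.trans ((div_le_one hpos).2 hrc), ?_⟩
    refine (Submodule.Quotient.eq _).2 ?_
    intro x hx
    rw [ContinuousLinearMap.sub_apply, adjOp_apply, hg x hx, sub_self]
  have hfinal : deltaQ (fun g : StrongDual ℝ Y =>
      (Submodule.Quotient.mk (adjOp T g) : StrongDual ℝ X ⧸ (annih M : Submodule ℝ (StrongDual ℝ X)))) ∈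
      { r : ℝ | ∃ N : Submodule ℝ (StrongDual ℝ X), IsClosed (N : Set (StrongDual ℝ X)) ∧
        ¬ FiniteDimensional ℝ (StrongDual ℝ X ⧸ N) ∧
        Function.Surjective (fun g : StrongDual ℝ Y => (Submodule.Quotient.mk (adjOp T g) : StrongDual ℝ X ⧸ N)) ∧
        r = deltaQ (fun g : StrongDual ℝ Y => (Submodule.Quotient.mk (adjOp T g) : StrongDual ℝ X ⧸ N)) } :=
    ⟨annih M, hNc, hNi, hsurj, rfl⟩
  refine le_trans (le_csSup ?_ hcd) (le_csSup (SCS_bddAbove (adjOp T)) hfinal)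
  exact ⟨‖adjOp T‖, fun d hd => mem_deltaQ_set_le (adjOp T) _ hNc hNi hd.1 hd.2⟩


lemma iota_norm {W : Type*} [NormedAddCommGroup W] [NormedSpace ℝ W] (x : W) :
    ‖inclusionInDoubleDual ℝ W x‖ = ‖x‖ :=
  (inclusionInDoubleDualLi ℝ).norm_map x

lemma adj2_apply (T : X →L[ℝ] Y) (x : X) :
    adjOp (adjOp T) (inclusionInDoubleDual ℝ X x) = inclusionInDoubleDual ℝ Y (T x) := rfl

lemma SS_transfer (T : X →L[ℝ] Y) (hrefl : Function.Surjective (inclusionInDoubleDual ℝ X)) :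
    SS (adjOp (adjOp T)) ≤ SS T := by
  apply Real.sSup_le _ (SS_nonneg T)
  rintro c ⟨M, hMc, hMi, rfl⟩
  set ι := inclusionInDoubleDual ℝ X with hι
  set M' : Submodule ℝ X := M.comap ι.toLinearMap with hM'
  have hM'c : IsClosed (M' : Set X) := hMc.preimage ι.continuous
  have hM'i : ¬ FiniteDimensional ℝ M' := by
    intro h
    apply hMi
    have hmap : M'.map ι.toLinearMap = M :=
      Submodule.map_comap_eq_of_surjective hrefl M
    rw [← hmap]
    infer_instance
  have hset : { r : ℝ | ∃ ξ ∈ M, ‖ξ‖ = 1 ∧ r = ‖adjOp (adjOp T) ξ‖ } =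
      { r : ℝ | ∃ x ∈ M', ‖x‖ = 1 ∧ r = ‖T x‖ } := by
    ext r
    constructor
    · rintro ⟨ξ, hξ, h1, rfl⟩
      obtain ⟨x, rfl⟩ := hrefl ξ
      refine ⟨x, Submodule.mem_comap.2 hξ, ?_, ?_⟩
      · rw [← iota_norm x]; exact h1
      · rw [adj2_apply, iota_norm]
    · rintro ⟨x, hx, h1, rfl⟩
      exact ⟨ι x, Submodule.mem_comap.1 hx, by rw [iota_norm, h1],
        by rw [adj2_apply, iota_norm]⟩
  refine le_csSup (SS_bddAbove T) ⟨M', hM'c, hM'i, ?_⟩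
  rw [← hset]

lemma SCS_transfer (T : X →L[ℝ] Y) (hrefl : Function.Surjective (inclusionInDoubleDual ℝ X)) :
    SCS (adjOp (adjOp T)) ≤ SCS T := by
  apply Real.sSup_le _ (SCS_nonneg T)
  rintro r ⟨N, hNc, hNi, hNs, rfl⟩
  set ιY := inclusionInDoubleDual ℝ Y with hιY
  set N' : Submodule ℝ Y := N.comap ιY.toLinearMap with hN'
  have hN'c : IsClosed (N' : Set Y) := hNc.preimage ιY.continuous
  have hcond : N' ≤ N.comap ιY.toLinearMap := le_rfl
  set κ : (Y ⧸ N') →ₗ[ℝ] (StrongDual ℝ (StrongDual ℝ Y) ⧸ N) := Submodule.mapQ N' N ιY.toLinearMap hcond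
    with hκdef
  have hκ : ∀ y : Y, κ (Submodule.Quotient.mk y) = Submodule.Quotient.mk (ιY y) :=
    fun y => rfl
  have hκinj : Function.Injective κ := by
    intro u v huv
    obtain ⟨y1, rfl⟩ := Submodule.Quotient.mk_surjective N' u
    obtain ⟨y2, rfl⟩ := Submodule.Quotient.mk_surjective N' v
    rw [hκ, hκ] at huv
    have h1 : ιY y1 - ιY y2 ∈ N := (Submodule.Quotient.eq _).1 huv
    refine (Submodule.Quotient.eq _).2 (Submodule.mem_comap.2 ?_)
    rw [map_sub]
    exact h1
  have hrep : ∀ u : StrongDual ℝ (StrongDual ℝ Y) ⧸ N, ∃ x : X,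
      (Submodule.Quotient.mk (ιY (T x)) : StrongDual ℝ (StrongDual ℝ Y) ⧸ N) = u := by
    intro u
    obtain ⟨x'', hx''⟩ := hNs u
    obtain ⟨x, rfl⟩ := hrefl x''
    exact ⟨x, by rw [← adj2_apply]; exact hx''⟩
  have hsur' : Function.Surjective (fun x : X => (Submodule.Quotient.mk (T x) : Y ⧸ N')) := by
    intro v
    obtain ⟨y, rfl⟩ := Submodule.Quotient.mk_surjective N' v
    obtain ⟨x, hx⟩ := hrep (Submodule.Quotient.mk (ιY y))
    refine ⟨x, (Submodule.Quotient.eq _).2 (Submodule.mem_comap.2 ?_)⟩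
    rw [map_sub]
    exact (Submodule.Quotient.eq _).1 hx
  have hκsurj : Function.Surjective κ := by
    intro u
    obtain ⟨x, hx⟩ := hrep u
    exact ⟨Submodule.Quotient.mk (T x), by rw [hκ]; exact hx⟩
  have hN'i : ¬ FiniteDimensional ℝ (Y ⧸ N') := fun h =>
    hNi (Module.Finite.of_surjective κ hκsurj)
  have hnormκ : ∀ v : Y ⧸ N', ‖κ v‖ ≤ ‖v‖ := by
    intro v
    refine le_of_forall_pos_le_add ?_
    intro ε hε
    obtain ⟨y, hy1, hy2⟩ := Submodule.Quotient.norm_mk_lt v hε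
    have h3 : ‖κ v‖ = ‖(Submodule.Quotient.mk (ιY y) : StrongDual ℝ (StrongDual ℝ Y) ⧸ N)‖ := by
      rw [← hy1, hκ]
    rw [h3]
    calc ‖(Submodule.Quotient.mk (ιY y) : StrongDual ℝ (StrongDual ℝ Y) ⧸ N)‖ ≤ ‖ιY y‖ :=
          Submodule.Quotient.norm_mk_le N _
      _ = ‖y‖ := iota_norm y
      _ ≤ ‖v‖ + ε := hy2.le
  have hD : ∀ d : ℝ, (0 < d ∧ ∀ w : StrongDual ℝ (StrongDual ℝ Y) ⧸ N, ‖w‖ ≤ d →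
      ∃ ξ : StrongDual ℝ (StrongDual ℝ X), ‖ξ‖ ≤ 1 ∧
        (Submodule.Quotient.mk (adjOp (adjOp T) ξ) : StrongDual ℝ (StrongDual ℝ Y) ⧸ N) = w) →
      (0 < d ∧ ∀ v : Y ⧸ N', ‖v‖ ≤ d →
      ∃ x : X, ‖x‖ ≤ 1 ∧ (Submodule.Quotient.mk (T x) : Y ⧸ N') = v) := by
    rintro d ⟨hd0, hd⟩
    refine ⟨hd0, ?_⟩
    intro v hv
    obtain ⟨ξ, hξ1, hξ2⟩ := hd (κ v) ((hnormκ v).trans hv)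
    obtain ⟨x, rfl⟩ := hrefl ξ
    refine ⟨x, by rw [← iota_norm x]; exact hξ1, ?_⟩
    apply hκinj
    rw [hκ, ← adj2_apply]
    exact hξ2
  refine le_trans (Real.sSup_le ?_ (deltaQ_nonneg' _))
    (le_csSup (SCS_bddAbove T) ⟨N', hN'c, hN'i, hsur', rfl⟩)
  intro d hd
  exact le_csSup ⟨‖T‖, fun d' hd' => mem_deltaQ_set_le T N' hN'c hN'i hd'.1 hd'.2⟩ (hD d hd)

end stmt8aux

theorem stmt8 {X Y : Type*} [NormedAddCommGroup X] [NormedSpace ℝ X] [CompleteSpace X]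
    [NormedAddCommGroup Y] [NormedSpace ℝ Y] [CompleteSpace Y] (T : X →L[ℝ] Y)
    (hrefl : Function.Surjective (inclusionInDoubleDual ℝ X)) :
    SCS T = SS (adjOp T) ∧ SS T = SCS (adjOp T) := by
  constructor
  · exact le_antisymm (ineqA T) ((ineqC (adjOp T)).trans (SCS_transfer T hrefl))
  · exact le_antisymm (ineqC T) ((ineqA (adjOp T)).trans (SS_transfer T hrefl))
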